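/- Let A = (a_{ij}) ∈ ℝ^{d×m} be a matrix with strictly positive entries, d ≥ 1, and regard its columns a_{·1}, …, a_{·m} as points of ℝ^d. Then the d-dimensional Lebesgue volume of their convex hull satisfies vol(conv{a_{·1},…,a_{·m}}) ≤ (d+1) · C(m, d+1) · max_{φ} ∏_{i∈[d]} a_{i,φ(i)}, where C(m,d+1) is the binomial coefficient and the maximum is over all injective maps φ : [d] → [m]. -/

import Mathlib

open scoped BigOperators ENNReal
open MeasureTheory Set Finset

namespace DequantAux

/-- The corner simplex `{w : 0 ≤ w, ∑ w ≤ 1}`. -/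
def cornerSimplex (d : ℕ) : Set (Fin d → ℝ) :=
  {w | (∀ i, 0 ≤ w i) ∧ ∑ i, w i ≤ 1}

/-- The set of points of the unit cube whose coordinates are antitone along `σ`. -/
def ordSet (d : ℕ) (σ : Equiv.Perm (Fin d)) : Set (Fin d → ℝ) :=
  {x | (∀ i, x i ∈ Set.Icc (0:ℝ) 1) ∧ ∀ i j : Fin d, i ≤ j → x (σ j) ≤ x (σ i)}

lemma measurableSet_ordSet (d : ℕ) (σ : Equiv.Perm (Fin d)) :
    MeasurableSet (ordSet d σ) := by
  have : ordSet d σ = (⋂ i, (fun x : Fin d → ℝ => x i) ⁻¹' Set.Icc (0:ℝ) 1) ∩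
      ⋂ (i) (j) (_ : i ≤ j), {x : Fin d → ℝ | x (σ j) ≤ x (σ i)} := by
    ext x
    simp [ordSet, Set.mem_iInter, forall_and]
  rw [this]
  exact (MeasurableSet.iInter fun i => (measurable_pi_apply i) measurableSet_Icc).inter
    (MeasurableSet.iInter fun i => MeasurableSet.iInter fun j => MeasurableSet.iInter fun _ =>
      measurableSet_le (measurable_pi_apply _) (measurable_pi_apply _))

lemma volume_hyperplane (d : ℕ) (i j : Fin d) (hij : i ≠ j) :
    volume {x : Fin d → ℝ | x i = x j} = 0 := by
  have : {x : Fin d → ℝ | x i = x j} =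
      ↑(LinearMap.ker ((LinearMap.proj i : (Fin d → ℝ) →ₗ[ℝ] ℝ) - LinearMap.proj j)) := by
    ext x; simp [LinearMap.mem_ker, sub_eq_zero, eq_comm]
  rw [this]
  apply MeasureTheory.Measure.addHaar_submodule
  intro h
  have h1 : (Pi.single i 1 : Fin d → ℝ) ∈
      LinearMap.ker ((LinearMap.proj i : (Fin d → ℝ) →ₗ[ℝ] ℝ) - LinearMap.proj j) := by
    rw [h]; trivial
  simp [LinearMap.mem_ker, Pi.single_apply, hij.symm] at h1

theorem volume_ordSet_eq (d : ℕ) (σ : Equiv.Perm (Fin d)) :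
    volume (ordSet d σ) = volume (ordSet d 1) := by
  have hmp := MeasureTheory.volume_measurePreserving_piCongrLeft (fun _ : Fin d => ℝ)
    (σ.symm : Fin d ≃ Fin d)
  have happ : ∀ (x : Fin d → ℝ) (b : Fin d),
      (MeasurableEquiv.piCongrLeft (fun _ : Fin d => ℝ) σ.symm) x b = x (σ b) := by
    intro x b
    simp [MeasurableEquiv.piCongrLeft, Equiv.piCongrLeft_apply_eq_cast]
  have hpre : (MeasurableEquiv.piCongrLeft (fun _ : Fin d => ℝ) σ.symm) ⁻¹' (ordSet d 1) =
      ordSet d σ := by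
    ext x
    simp only [Set.mem_preimage, ordSet, Set.mem_setOf_eq, happ, Equiv.Perm.coe_one, id_eq]
    constructor
    · rintro ⟨h1, h2⟩
      exact ⟨fun i => by simpa using h1 (σ.symm i), h2⟩
    · rintro ⟨h1, h2⟩
      exact ⟨fun i => h1 _, h2⟩
  rw [← hpre, hmp.measure_preimage (measurableSet_ordSet d 1).nullMeasurableSet]

theorem aedisjoint_ordSet (d : ℕ) {σ τ : Equiv.Perm (Fin d)} (h : σ ≠ τ) :
    volume (ordSet d σ ∩ ordSet d τ) = 0 := by
  refine measure_mono_null (fun x hx => ?_)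
    (measure_iUnion_null (fun i : Fin d => measure_iUnion_null fun j : Fin d =>
      measure_iUnion_null fun hij => volume_hyperplane d i j hij))
  · show x ∈ ⋃ (i : Fin d) (j : Fin d) (_ : i ≠ j), {x : Fin d → ℝ | x i = x j}
    by_contra hN
    simp only [Set.mem_iUnion, not_exists, Set.mem_setOf_eq] at hN
    have hinj : Function.Injective x := by
      intro a b hab
      by_contra hne
      exact hN a b hne hab
    have hsa : ∀ ρ : Equiv.Perm (Fin d), x ∈ ordSet d ρ → StrictAnti (x ∘ ρ) := by
      intro ρ hρ a b hab
      refine lt_of_le_of_ne (hρ.2 a b hab.le) ?_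
      intro heq
      exact absurd (ρ.injective (hinj heq)) hab.ne'
    have hr : Set.range (x ∘ σ) = Set.range (x ∘ τ) := by
      rw [Set.range_comp, Set.range_comp]
      simp [σ.surjective.range_eq, τ.surjective.range_eq]
    have := ((hsa σ hx.1).range_inj (hsa τ hx.2)).mp hr
    apply h
    ext a
    exact congrArg Fin.val (hinj (congrFun this a))

theorem volume_ordSet_le (d : ℕ) :
    volume (ordSet d 1) ≤ ((d.factorial : ENNReal))⁻¹ := by
  have hU : volume (⋃ σ : Equiv.Perm (Fin d), ordSet d σ) =
      ∑' σ : Equiv.Perm (Fin d), volume (ordSet d σ) :=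
    measure_iUnion₀ (fun σ τ hστ => aedisjoint_ordSet d hστ)
      (fun σ => (measurableSet_ordSet d σ).nullMeasurableSet)
  have hsum : ∑' σ : Equiv.Perm (Fin d), volume (ordSet d σ) =
      (d.factorial : ENNReal) * volume (ordSet d 1) := by
    rw [tsum_fintype]
    simp only [volume_ordSet_eq]
    rw [Finset.sum_const, Finset.card_univ, Fintype.card_perm, Fintype.card_fin, nsmul_eq_mul]
  have hcube : volume (⋃ σ : Equiv.Perm (Fin d), ordSet d σ) ≤ 1 := by
    have hsub : (⋃ σ : Equiv.Perm (Fin d), ordSet d σ) ⊆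
        Set.pi Set.univ (fun _ : Fin d => Set.Icc (0:ℝ) 1) := by
      refine Set.iUnion_subset fun σ x hx => ?_
      intro i _
      exact hx.1 i
    refine (measure_mono hsub).trans ?_
    rw [volume_pi_pi]
    simp [Real.volume_Icc]
  rw [hU, hsum] at hcube
  rw [ENNReal.le_inv_iff_mul_le, mul_comm]
  exact hcube

theorem volume_cornerSimplex_le (d : ℕ) :
    volume (cornerSimplex d) ≤ ((d.factorial : ENNReal))⁻¹ := by
  classical
  set Q : Matrix (Fin d) (Fin d) ℝ := Matrix.of fun i j => if i ≤ j then (1:ℝ) else 0 with hQ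
  have hdet : Q.det = 1 := by
    rw [Matrix.det_of_upperTriangular]
    · simp [hQ]
    · intro i j hij
      exact if_neg (not_le.mpr hij)
  have happ : ∀ (w : Fin d → ℝ) (i : Fin d),
      Matrix.toLin' Q w i = ∑ j ∈ Finset.univ.filter (fun j => i ≤ j), w j := by
    intro w i
    rw [Matrix.toLin'_apply]
    show (Q.mulVec w) i = _
    rw [Matrix.mulVec, dotProduct]
    rw [Finset.sum_filter]
    refine Finset.sum_congr rfl fun j _ => ?_
    by_cases h : i ≤ j <;> simp [hQ, h]
  have hsub : (Matrix.toLin' Q) '' cornerSimplex d ⊆ ordSet d 1 := by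
    rintro _ ⟨w, hw, rfl⟩
    constructor
    · intro i
      rw [happ]
      constructor
      · exact Finset.sum_nonneg fun j _ => hw.1 j
      · refine le_trans (Finset.sum_le_sum_of_subset_of_nonneg (Finset.filter_subset _ _)
          (fun j _ _ => hw.1 j)) hw.2
    · intro i j hij
      simp only [Equiv.Perm.coe_one, id_eq]
      rw [happ, happ]
      refine Finset.sum_le_sum_of_subset_of_nonneg ?_ (fun k _ _ => hw.1 k)
      intro k hk
      simp only [Finset.mem_filter, Finset.mem_univ, true_and] at hk ⊢
      exact hij.trans hk
  have himg : volume ((Matrix.toLin' Q) '' cornerSimplex d) = volume (cornerSimplex d) := by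
    rw [MeasureTheory.Measure.addHaar_image_linearMap]
    rw [LinearMap.det_toLin', hdet]
    simp
  calc volume (cornerSimplex d) = volume ((Matrix.toLin' Q) '' cornerSimplex d) := himg.symm
    _ ≤ volume (ordSet d 1) := measure_mono hsub
    _ ≤ ((d.factorial : ENNReal))⁻¹ := volume_ordSet_le d

lemma mem_convexHull_range_fin {d n : ℕ} (v : Fin n → (Fin d → ℝ)) {x : Fin d → ℝ}
    (hx : x ∈ convexHull ℝ (Set.range v)) :
    ∃ w : Fin n → ℝ, (∀ i, 0 ≤ w i) ∧ ∑ i, w i = 1 ∧ ∑ i, w i • v i = x := by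
  rw [convexHull_range_eq_exists_affineCombination] at hx
  obtain ⟨s, w, h0, h1, rfl⟩ := hx
  refine ⟨fun i => if i ∈ s then w i else 0, fun i => ?_, ?_, ?_⟩
  · dsimp only; split_ifs with h
    · exact h0 i h
    · exact le_refl _
  · simp only []
    rw [Finset.sum_ite_mem, Finset.univ_inter, h1]
  · rw [affineCombination_eq_linear_combination s v w h1]
    have : ∀ i : Fin n, (if i ∈ s then w i else 0) • v i
        = (if i ∈ s then w i • v i else 0) := by
      intro i; split_ifs <;> simp
    simp only [this]
    rw [Finset.sum_ite_mem, Finset.univ_inter]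

theorem abs_det_le {d m : ℕ} (A : Matrix (Fin d) (Fin m) ℝ) (hA : ∀ i j, 0 < A i j)
    (c : Fin (d+1) → Fin m) (hc : Function.Injective c) :
    |Matrix.det (Matrix.of fun i j : Fin d => A i (c j.succ) - A i (c 0))| ≤
      ((d+1).factorial : ℝ) * ⨆ φ : Fin d ↪ Fin m, ∏ i, A i (φ i) := by
  classical
  set M : ℝ := ⨆ φ : Fin d ↪ Fin m, ∏ i, A i (φ i) with hM
  have hbdd : BddAbove (Set.range fun φ : Fin d ↪ Fin m => ∏ i, A i (φ i)) :=
    Set.Finite.bddAbove (Set.finite_range _)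
  set C : Matrix (Fin (d+1)) (Fin (d+1)) ℝ :=
    Matrix.of fun i j => Fin.cases (motive := fun _ => ℝ) 1 (fun i' => A i' (c j)) i with hC
  have hC0 : ∀ j, C 0 j = 1 := fun j => rfl
  have hCs : ∀ (i : Fin d) j, C i.succ j = A i (c j) := fun i j => rfl
  set C' : Matrix (Fin (d+1)) (Fin (d+1)) ℝ :=
    Matrix.of fun i j => if j = 0 then C i 0 else C i j - C i 0 with hC'
  -- column operations don't change the determinant
  have h1 : C.det = C'.det := by
    rw [← Matrix.det_transpose C, ← Matrix.det_transpose C']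
    refine Matrix.det_eq_of_forall_row_eq_smul_add_const
      (fun p => if p = 0 then 0 else 1) 0 (if_pos rfl) (fun p q => ?_)
    by_cases hp : p = 0
    · simp [hp, hC', Matrix.transpose_apply]
    · simp only [Matrix.transpose_apply, hC', Matrix.of_apply, if_neg hp, if_pos rfl, hp,
        if_false, if_true]
      ring
  -- expansion along the first row
  have h2 : C'.det = Matrix.det (Matrix.of fun i j : Fin d => A i (c j.succ) - A i (c 0)) := by
    rw [Matrix.det_succ_row_zero]
    rw [Finset.sum_eq_single 0]
    · have h00 : C' 0 0 = 1 := by simp [hC', hC0]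
      have hsub : C'.submatrix Fin.succ (Fin.succAbove 0) =
          Matrix.of fun i j : Fin d => A i (c j.succ) - A i (c 0) := by
        ext i j
        simp [hC', Matrix.submatrix_apply, Fin.succ_ne_zero, hCs, Fin.succAbove_zero]
      rw [h00, hsub]
      simp
    · intro j _ hj
      have : C' 0 j = 0 := by simp [hC', hj, hC0]
      rw [this]
      ring
    · intro h
      exact absurd (Finset.mem_univ 0) h
  rw [← h2, ← h1]
  -- bound |det C| termwise
  rw [← Matrix.det_transpose C, Matrix.det_apply']
  refine le_trans (Finset.abs_sum_le_sum_abs _ _) ?_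
  have hterm : ∀ σ : Equiv.Perm (Fin (d+1)),
      |((Equiv.Perm.sign σ : ℤ) : ℝ) * ∏ i, C.transpose (σ i) i| ≤ M := by
    intro σ
    have hsign : |((Equiv.Perm.sign σ : ℤ) : ℝ)| = 1 := by
      rcases Int.units_eq_one_or (Equiv.Perm.sign σ) with h | h <;> simp [h]
    rw [abs_mul, hsign, one_mul]
    have hprod : ∏ i, C.transpose (σ i) i = ∏ i : Fin d, A i (c (σ i.succ)) := by
      rw [Fin.prod_univ_succ]
      simp only [Matrix.transpose_apply]
      rw [hC0, one_mul]
      exact Finset.prod_congr rfl fun i _ => by rw [hCs]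
    rw [hprod, abs_of_nonneg (Finset.prod_nonneg fun i _ => (hA i _).le)]
    have hinj : Function.Injective (fun i : Fin d => c (σ i.succ)) :=
      hc.comp (σ.injective.comp (Fin.succ_injective d))
    exact le_ciSup hbdd ⟨fun i => c (σ i.succ), hinj⟩
  calc ∑ σ : Equiv.Perm (Fin (d+1)), |((Equiv.Perm.sign σ : ℤ) : ℝ) * ∏ i, C.transpose (σ i) i|
      ≤ ∑ _σ : Equiv.Perm (Fin (d+1)), M := Finset.sum_le_sum fun σ _ => hterm σ
    _ = ((d+1).factorial : ℝ) * M := by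
        rw [Finset.sum_const, Finset.card_univ, Fintype.card_perm, Fintype.card_fin, nsmul_eq_mul]

theorem volume_simplex_le {d m : ℕ} (A : Matrix (Fin d) (Fin m) ℝ) (hA : ∀ i j, 0 < A i j)
    (c : Fin (d+1) → Fin m) (hc : Function.Injective c) :
    volume (convexHull ℝ (Set.range fun k : Fin (d+1) => fun i => A i (c k))) ≤
      ENNReal.ofReal (((d : ℝ) + 1) * ⨆ φ : Fin d ↪ Fin m, ∏ i, A i (φ i)) := by
  classical
  set M : ℝ := ⨆ φ : Fin d ↪ Fin m, ∏ i, A i (φ i) with hM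
  have hM0 : 0 ≤ M := Real.iSup_nonneg fun φ => Finset.prod_nonneg fun i _ => (hA i _).le
  set v : Fin (d+1) → (Fin d → ℝ) := fun k => fun i => A i (c k) with hv
  set B : Matrix (Fin d) (Fin d) ℝ :=
    Matrix.of fun i j : Fin d => A i (c j.succ) - A i (c 0) with hB
  set T := Matrix.toLin' B with hT
  have hsub : convexHull ℝ (Set.range v) ⊆ (fun x => v 0 + x) '' (T '' cornerSimplex d) := by
    intro x hx
    obtain ⟨w, hw0, hw1, hwx⟩ := mem_convexHull_range_fin v hx
    have hsum : ∑ j : Fin d, w j.succ = 1 - w 0 := by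
      rw [Fin.sum_univ_succ] at hw1; linarith
    refine ⟨T (fun j => w j.succ), ⟨fun j => w j.succ, ⟨fun j => hw0 _, by rw [hsum]; linarith [hw0 0]⟩, rfl⟩, ?_⟩
    funext i
    have hTi : T (fun j => w j.succ) i = ∑ j : Fin d, (A i (c j.succ) - A i (c 0)) * w j.succ := by
      rw [hT, Matrix.toLin'_apply]
      show (B.mulVec fun j => w j.succ) i = _
      rw [Matrix.mulVec, dotProduct]
      rfl
    have hxi : x i = ∑ k : Fin (d+1), w k * A i (c k) := by
      rw [← hwx]
      rw [Finset.sum_apply]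
      rfl
    simp only [Pi.add_apply, hTi, hxi]
    rw [Fin.sum_univ_succ]
    have expand : ∑ j : Fin d, (A i (c j.succ) - A i (c 0)) * w j.succ
        = (∑ j : Fin d, w j.succ * A i (c j.succ)) - (1 - w 0) * A i (c 0) := by
      rw [← hsum, Finset.sum_mul, ← Finset.sum_sub_distrib]
      exact Finset.sum_congr rfl fun j _ => by ring
    rw [hv]
    simp only []
    rw [expand]
    ring
  have htrans : volume ((fun x => v 0 + x) '' (T '' cornerSimplex d))
      = volume (T '' cornerSimplex d) := by
    rw [Set.image_add_left, measure_preimage_add]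
  have himg : volume (T '' cornerSimplex d)
      = ENNReal.ofReal |B.det| * volume (cornerSimplex d) := by
    rw [hT, MeasureTheory.Measure.addHaar_image_linearMap, LinearMap.det_toLin']
  calc volume (convexHull ℝ (Set.range v))
      ≤ volume ((fun x => v 0 + x) '' (T '' cornerSimplex d)) := measure_mono hsub
    _ = ENNReal.ofReal |B.det| * volume (cornerSimplex d) := by rw [htrans, himg]
    _ ≤ ENNReal.ofReal (((d+1).factorial : ℝ) * M) * ((d.factorial : ENNReal))⁻¹ := by
        exact mul_le_mul' (ENNReal.ofReal_le_ofReal (abs_det_le A hA c hc))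
          (volume_cornerSimplex_le d)
    _ = ENNReal.ofReal (((d : ℝ) + 1) * M) := by
        rw [Nat.factorial_succ]
        have : (((d+1) * d.factorial : ℕ) : ℝ) * M = (((d:ℝ)+1) * M) * (d.factorial : ℕ) := by
          push_cast; ring
        rw [this, ENNReal.ofReal_mul (by positivity), ENNReal.ofReal_natCast, mul_assoc,
          ENNReal.mul_inv_cancel (by exact_mod_cast d.factorial_ne_zero) (ENNReal.natCast_ne_top _),
          mul_one]


end DequantAux

open DequantAux in
/-- for a matrix `A ∈ ℝ^{d×m}` with strictly positive entries, the
Lebesgue volume of the convex hull of its columns is bounded by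
`(d+1)·C(m,d+1)·max_φ ∏_i a_{i,φ(i)}`, the maximum being over injective maps
`φ : [d] → [m]` (encoded as embeddings `Fin d ↪ Fin m`). -/
theorem volume_convexHull_le_dequantized (d m : ℕ) (hd : 1 ≤ d)
    (A : Matrix (Fin d) (Fin m) ℝ) (hA : ∀ i j, 0 < A i j) :
    MeasureTheory.volume (convexHull ℝ (Set.range fun j : Fin m => fun i => A i j)) ≤
      ENNReal.ofReal
        (((d : ℝ) + 1) * (Nat.choose m (d + 1) : ℝ) *
          ⨆ φ : Fin d ↪ Fin m, ∏ i, A i (φ i)) := by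
  classical
  set f : Fin m → (Fin d → ℝ) := fun j => fun i => A i j with hf
  set M : ℝ := ⨆ φ : Fin d ↪ Fin m, ∏ i, A i (φ i) with hM
  have hM0 : 0 ≤ M := Real.iSup_nonneg fun φ => Finset.prod_nonneg fun i _ => (hA i _).le
  have hfinrank : Module.finrank ℝ (Fin d → ℝ) = d := Module.finrank_fin_fun ℝ
  by_cases hm : m < d + 1
  · -- degenerate case: too few points, hull is in a proper affine subspace
    have hch : Nat.choose m (d+1) = 0 := Nat.choose_eq_zero_of_lt hm
    have hspan : affineSpan ℝ (Set.range f) ≠ ⊤ := by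
      intro htop
      have h1 : vectorSpan ℝ (Set.range f) = ⊤ := by
        rw [← direction_affineSpan, htop, AffineSubspace.direction_top]
      rcases Nat.eq_zero_or_pos m with hm0 | hm0
      · subst hm0
        have : Set.range f = ∅ := Set.range_eq_empty f
        rw [this, AffineSubspace.span_empty] at htop
        have h0 : (0 : Fin d → ℝ) ∈ (⊥ : AffineSubspace ℝ (Fin d → ℝ)) := by
          rw [htop]; trivial
        exact AffineSubspace.notMem_bot ℝ (Fin d → ℝ) _ h0
      · have h2 : Module.finrank ℝ (vectorSpan ℝ (Set.range f)) ≤ m - 1 :=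
          finrank_vectorSpan_range_le ℝ f (by rw [Fintype.card_fin]; omega)
        rw [h1, finrank_top, hfinrank] at h2
        omega
    have hnull : volume (convexHull ℝ (Set.range f)) = 0 := by
      refine measure_mono_null ?_
        (MeasureTheory.Measure.addHaar_affineSubspace volume _ hspan)
      exact (convexHull_subset_affineSpan _).trans (by simp)
    rw [hnull, hch]
    simp
  · push_neg at hm
    have hcover : convexHull ℝ (Set.range f) ⊆
        ⋃ S ∈ Finset.powersetCard (d+1) (Finset.univ : Finset (Fin m)), convexHull ℝ (f '' (↑S : Set (Fin m))) := by
      intro x hx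
      rw [convexHull_eq_union] at hx
      simp only [Set.mem_iUnion, exists_prop] at hx
      obtain ⟨t, hts, hai, hxt⟩ := hx
      have hcard : t.card ≤ d + 1 := by
        have h1 := hai.card_le_finrank_succ
        rw [Fintype.card_coe] at h1
        refine h1.trans ?_
        have := Submodule.finrank_le (vectorSpan ℝ (Set.range ((↑) : t → (Fin d → ℝ))))
        omega
      have hex : ∀ y ∈ t, ∃ j : Fin m, f j = y := fun y hy => hts hy
      choose g hg using hex
      set T₀ : Finset (Fin m) := t.attach.image (fun y => g y.1 y.2) with hT₀
      have hT₀card : T₀.card ≤ d + 1 := by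
        refine le_trans (Finset.card_image_le.trans ?_) hcard
        rw [Finset.card_attach]
      obtain ⟨S, hS₀, _, hScard⟩ := Finset.exists_subsuperset_card_eq
        (Finset.subset_univ T₀) hT₀card (by rwa [Finset.card_univ, Fintype.card_fin])
      refine Set.mem_biUnion (Finset.mem_powersetCard.mpr ⟨Finset.subset_univ S, hScard⟩) ?_
      refine convexHull_mono ?_ hxt
      intro y hy
      refine ⟨g y hy, hS₀ (Finset.mem_image.mpr ⟨⟨y, hy⟩, Finset.mem_attach _ _, rfl⟩), hg y hy⟩
    refine le_trans (measure_mono hcover) ?_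
    refine le_trans (measure_biUnion_finset_le _ _) ?_
    have hone : ∀ S ∈ Finset.powersetCard (d+1) (Finset.univ : Finset (Fin m)),
        volume (convexHull ℝ (f '' (↑S : Set (Fin m)))) ≤ ENNReal.ofReal (((d : ℝ) + 1) * M) := by
      intro S hS
      have hScard : S.card = d + 1 := (Finset.mem_powersetCard.mp hS).2
      set c : Fin (d+1) → Fin m := ⇑(S.orderEmbOfFin hScard) with hc
      have hrange : f '' (↑S : Set (Fin m)) = Set.range fun k : Fin (d+1) => fun i => A i (c k) := by
        rw [← Finset.range_orderEmbOfFin S hScard, ← Set.range_comp]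
        rfl
      rw [hrange]
      exact volume_simplex_le A hA c (S.orderEmbOfFin hScard).injective
    refine le_trans (Finset.sum_le_sum hone) ?_
    rw [Finset.sum_const, Finset.card_powersetCard, Finset.card_univ, Fintype.card_fin,
      nsmul_eq_mul]
    rw [← ENNReal.ofReal_natCast, ← ENNReal.ofReal_mul (by positivity)]
    refine ENNReal.ofReal_le_ofReal ?_
    rw [hM]
    ring_nf
    exact le_refl _
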